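/- Let P and P_ε be Markov kernels on X with π stationary for P, P acting on L²(π) through T_P and L²(π)-geometrically ergodic with rate 1−α, P_ε acting on L²(π) through T_ε, ‖T_P − T_ε‖ ≤ ε, and 0 < ε < α. Suppose P_ε has a stationary probability measure π_ε with π_ε ≪ π, π ≪ π_ε and dπ_ε/dπ ∈ L²(π). Then for every probability measure μ ≪ π with dμ/dπ ∈ L²(π) and every n ∈ ℕ: ‖μP_εⁿ − π‖₂ ≤ (1−(α−ε))ⁿ ‖μ − π_ε‖₂ + ε/√(α² − ε²); and for every probability measure ν with bounded density dν/dπ_ε there is a finite constant C_ν such that ‖νP_εⁿ − π‖₁ ≤ C_ν (1−(α−ε))ⁿ + ε/√(α² − ε²). -/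

import Mathlib

open MeasureTheory ProbabilityTheory Filter ENNReal

variable {X : Type*} [MeasurableSpace X]

/-- The real-valued Radon–Nikodym density of `μ` with respect to `π`. -/
noncomputable def rnd (π μ : Measure X) (x : X) : ℝ := (μ.rnDeriv π x).toReal

/-- `n`-fold action of the kernel `P` on the measure `μ`, i.e. `μPⁿ`. -/
noncomputable def mIter (P : Kernel X X) (n : ℕ) (μ : Measure X) : Measure X :=
  (fun ν => ν.bind (fun x => P x))^[n] μ

/-- `n`-fold composition of the kernel `P`, i.e. `Pⁿ`. -/
noncomputable def kpow (P : Kernel X X) : ℕ → Kernel X X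
  | 0 => Kernel.id
  | n + 1 => (kpow P n).comp P

/-- `‖μ − ν‖₂`, the `L²(π)` distance between the `π`-densities of `μ` and `ν`. -/
noncomputable def d2 (π μ ν : Measure X) : ℝ :=
  (eLpNorm (fun x => rnd π μ x - rnd π ν x) 2 π).toReal

/-- `‖μ − ν‖₁`, the `L¹(π)` distance between the `π`-densities of `μ` and `ν`. -/
noncomputable def d1 (π μ ν : Measure X) : ℝ := ∫ x, |rnd π μ x - rnd π ν x| ∂π

/-- `P` acts on `L²(π)` through the bounded linear operator `T`:
for every probability measure `μ ≪ π` with `dμ/dπ ∈ L²(π)`,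
`T(dμ/dπ)` is a version of `d(μP)/dπ`. -/
def ActsOn (π : Measure X) (P : Kernel X X) (T : Lp ℝ 2 π →L[ℝ] Lp ℝ 2 π) : Prop :=
  ∀ μ : Measure X, IsProbabilityMeasure μ → μ ≪ π →
    ∀ h : MemLp (rnd π μ) 2 π,
      ⇑(T (h.toLp (rnd π μ))) =ᵐ[π] rnd π (μ.bind (fun x => P x))

/-- `L²(π)`-geometric ergodicity with rate `1 − α`:
`T` contracts mean-zero functions by the factor `1 − α`. -/
def IsGeomErg (π : Measure X) (T : Lp ℝ 2 π →L[ℝ] Lp ℝ 2 π) (α : ℝ) : Prop :=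
  ∀ f : Lp ℝ 2 π, ∫ x, f x ∂π = 0 → ‖T f‖ ≤ (1 - α) * ‖f‖

/-- Reversibility of `P` with respect to `π`. -/
def Reversible (π : Measure X) (P : Kernel X X) : Prop :=
  ∀ A B : Set X, MeasurableSet A → MeasurableSet B →
    ∫⁻ x in A, P x B ∂π = ∫⁻ x in B, P x A ∂π

/-- `∫ h dPᵏ(x,·)`, the `k`-step forward operator applied to `h`. -/
noncomputable def kInt (P : Kernel X X) (k : ℕ) (h : X → ℝ) (x : X) : ℝ :=
  ∫ y, h y ∂(kpow P k x)

/-- `μPᵏh = ∫∫ h(y) Pᵏ(x,dy) μ(dx)`. -/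
noncomputable def mkInt (P : Kernel X X) (μ : Measure X) (k : ℕ) (h : X → ℝ) : ℝ :=
  ∫ x, kInt P k h x ∂μ

/-- Path covariance `Cov_μ(f(X_t), g(X_{t+s}))` of the chain with kernel `P` started at `μ`. -/
noncomputable def covPath (P : Kernel X X) (μ : Measure X) (t s : ℕ) (f g : X → ℝ) : ℝ :=
  ∫ x, (∫ y, (∫ z, (f y - mkInt P μ t f) * (g z - mkInt P μ (t + s) g)
    ∂(kpow P s y)) ∂(kpow P t x)) ∂μ

/-- Path covariance `Cov_μ(f(X_m), g(X_n))` of the chain with kernel `P` started at `μ`. -/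
noncomputable def covPath2 (P : Kernel X X) (μ : Measure X) (m n : ℕ) (f g : X → ℝ) : ℝ :=
  ∫ x, (∫ y, (∫ z, (f y - mkInt P μ (min m n) f) * (g z - mkInt P μ (max m n) g)
    ∂(kpow P (max m n - min m n) y)) ∂(kpow P (min m n) x)) ∂μ


lemma bind_absCont {P : Kernel X X} {μ ν : Measure X} (h : μ ≪ ν) :
    μ.bind (fun x => P x) ≪ ν.bind (fun x => P x) := by
  refine Measure.AbsolutelyContinuous.mk fun s hs h0 => ?_
  rw [Measure.bind_apply hs P.measurable.aemeasurable] at h0 ⊢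
  rw [lintegral_eq_zero_iff (P.measurable_coe hs)] at h0 ⊢
  exact h.ae_eq h0

lemma isProbabilityMeasure_bind' {μ : Measure X} (hm : IsProbabilityMeasure μ)
    (P : Kernel X X) [IsMarkovKernel P] :
    IsProbabilityMeasure (μ.bind (fun x => P x)) := by
  constructor
  rw [Measure.bind_apply MeasurableSet.univ P.measurable.aemeasurable]
  simp [measure_univ]

set_option maxHeartbeats 1000000 in
/-- Finite-time error bounds towards `π` for the perturbed chain, in `L²(π)` and in `L¹`. -/
theorem stmt8 (π : Measure X) [IsProbabilityMeasure π] (P Pe : Kernel X X)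
    [IsMarkovKernel P] [IsMarkovKernel Pe]
    (hstat : π.bind (fun x => P x) = π)
    (α ε : ℝ) (hα0 : 0 < α) (hα1 : α < 1) (hε0 : 0 < ε) (hεα : ε < α)
    (T Te : Lp ℝ 2 π →L[ℝ] Lp ℝ 2 π) (hT : ActsOn π P T) (hTe : ActsOn π Pe Te)
    (hge : IsGeomErg π T α) (hdiff : ‖T - Te‖ ≤ ε)
    (πe : Measure X) [IsProbabilityMeasure πe] (hstate : πe.bind (fun x => Pe x) = πe)
    (hac1 : πe ≪ π) (hac2 : π ≪ πe) (hπe : MemLp (rnd π πe) 2 π) :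
    (∀ μ : Measure X, IsProbabilityMeasure μ → μ ≪ π → MemLp (rnd π μ) 2 π →
      ∀ n : ℕ, d2 π (mIter Pe n μ) π
        ≤ (1 - (α - ε)) ^ n * d2 π μ πe + ε / Real.sqrt (α ^ 2 - ε ^ 2)) ∧
    (∀ ν : Measure X, IsProbabilityMeasure ν → ν ≪ πe →
      ∀ M : ℝ, (∀ᵐ x ∂πe, rnd πe ν x ≤ M) →
        ∃ C : ℝ, ∀ n : ℕ, d1 π (mIter Pe n ν) π
          ≤ C * (1 - (α - ε)) ^ n + ε / Real.sqrt (α ^ 2 - ε ^ 2)) := by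
  set s := Real.sqrt (α ^ 2 - ε ^ 2) with hs_def
  have hs : 0 < s := Real.sqrt_pos.mpr (by nlinarith)
  have hone : rnd π π =ᵐ[π] fun _ => (1 : ℝ) :=
    (Measure.rnDeriv_self π).mono fun x hx => by simp [rnd, hx]
  have hI : MemLp (rnd π π) 2 π := MemLp.ae_eq hone.symm (memLp_const 1)
  set I : Lp ℝ 2 π := hI.toLp (rnd π π) with hI_def
  set G : Lp ℝ 2 π := hπe.toLp (rnd π πe) with hG_def
  have hπne : π ≠ 0 := by
    intro h
    have := measure_univ (μ := π)
    rw [h] at this; simp at this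
  have hInorm : ‖I‖ = 1 := by
    rw [Lp.norm_def, eLpNorm_congr_ae (hI.coeFn_toLp.trans hone),
      eLpNorm_const _ (by norm_num) hπne]
    simp [measure_univ]
  have hint : ∀ (μ : Measure X), IsProbabilityMeasure μ → μ ≪ π →
      ∀ hm : MemLp (rnd π μ) 2 π, ∫ x, (hm.toLp (rnd π μ)) x ∂π = 1 := by
    intro μ h1 h2 hm
    rw [integral_congr_ae hm.coeFn_toLp]
    have := Measure.integral_toReal_rnDeriv h2
    simpa [rnd, measure_univ] using this
  have hIint : ∫ x, I x ∂π = 1 := hint π inferInstance Measure.AbsolutelyContinuous.rfl hI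
  have hGint : ∫ x, G x ∂π = 1 := hint πe inferInstance hac1 hπe
  have hmz : ∀ F H : Lp ℝ 2 π, ∫ x, F x ∂π = 1 → ∫ x, H x ∂π = 1 →
      ∫ x, (F - H) x ∂π = 0 := by
    intro F H hF hH
    rw [integral_congr_ae (Lp.coeFn_sub F H)]
    simp only [Pi.sub_apply]
    rw [integral_sub ((Lp.memLp F).integrable one_le_two) ((Lp.memLp H).integrable one_le_two),
      hF, hH, sub_self]
  have hcontr : ∀ F : Lp ℝ 2 π, ∫ x, F x ∂π = 0 → ‖Te F‖ ≤ (1 - (α - ε)) * ‖F‖ := by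
    intro F hF
    have h1 : ‖Te F‖ ≤ ‖T F‖ + ‖(T - Te) F‖ := by
      have he : Te F = T F - (T - Te) F := by
        simp [ContinuousLinearMap.sub_apply]
      rw [he]
      exact norm_sub_le _ _
    have h2 : ‖(T - Te) F‖ ≤ ε * ‖F‖ :=
      le_trans ((T - Te).le_opNorm F) (mul_le_mul_of_nonneg_right hdiff (norm_nonneg F))
    have h3 := hge F hF
    nlinarith [norm_nonneg F]
  have hTeG : Te G = G := by
    have hae := hTe πe inferInstance hac1 hπe
    rw [hstate] at hae
    exact Lp.ext (hae.trans hπe.coeFn_toLp.symm)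
  have hTI : T I = I := by
    have hae := hT π inferInstance Measure.AbsolutelyContinuous.rfl hI
    rw [hstat] at hae
    exact Lp.ext (hae.trans hI.coeFn_toLp.symm)
  have hImz : ∫ x, (G - I) x ∂π = 0 := hmz G I hGint hIint
  have key : ‖G - I‖ ≤ (1 - α) * ‖G - I‖ + ε * ‖G‖ := by
    have hrw : T (G - I) + (Te - T) G = G - I := by
      simp only [map_sub, ContinuousLinearMap.sub_apply, hTI, hTeG]
      abel
    calc ‖G - I‖ = ‖T (G - I) + (Te - T) G‖ := by rw [hrw]
      _ ≤ ‖T (G - I)‖ + ‖(Te - T) G‖ := norm_add_le _ _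
      _ ≤ (1 - α) * ‖G - I‖ + ε * ‖G‖ := by
          refine add_le_add (hge _ hImz) ?_
          refine le_trans ((Te - T).le_opNorm G) ?_
          have hd : ‖Te - T‖ ≤ ε := by rw [norm_sub_rev]; exact hdiff
          exact mul_le_mul_of_nonneg_right hd (norm_nonneg G)
  have hGsq : ‖G‖ ^ 2 = 1 + ‖G - I‖ ^ 2 := by
    have h0 : (inner ℝ I (G - I) : ℝ) = 0 := by
      rw [L2.inner_def, ← hImz]
      refine integral_congr_ae ?_
      filter_upwards [hI.coeFn_toLp.trans hone] with x hx
      simp [RCLike.inner_apply, hI_def, hx]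
    have hG : G = I + (G - I) := by abel
    calc ‖G‖ ^ 2 = ‖I + (G - I)‖ ^ 2 := by rw [← hG]
      _ = ‖I‖ ^ 2 + 2 * (inner ℝ I (G - I) : ℝ) + ‖G - I‖ ^ 2 := norm_add_sq_real _ _
      _ = 1 + ‖G - I‖ ^ 2 := by rw [h0, hInorm]; ring
  have hGI : ‖G - I‖ ≤ ε / s := by
    have hδ0 : 0 ≤ ‖G - I‖ := norm_nonneg _
    have hG0 : 0 ≤ ‖G‖ := norm_nonneg _
    have h1 : α * ‖G - I‖ ≤ ε * ‖G‖ := by linarith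
    have hsq : s ^ 2 = α ^ 2 - ε ^ 2 := Real.sq_sqrt (by nlinarith)
    have h2 : (α * ‖G - I‖) * (α * ‖G - I‖) ≤ (ε * ‖G‖) * (ε * ‖G‖) :=
      mul_self_le_mul_self (mul_nonneg hα0.le hδ0) h1
    have h3 : (‖G - I‖ * s) ^ 2 ≤ ε ^ 2 := by nlinarith
    have h4 : ‖G - I‖ * s ≤ ε := by
      have h5 := Real.sqrt_le_sqrt h3
      rwa [Real.sqrt_sq (by positivity), Real.sqrt_sq hε0.le] at h5
    rw [le_div_iff₀ hs]
    exact h4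
  have step : ∀ (μ : Measure X), IsProbabilityMeasure μ → μ ≪ π →
      ∀ hm : MemLp (rnd π μ) 2 π,
      ∃ hm' : MemLp (rnd π (μ.bind (fun x => Pe x))) 2 π,
        hm'.toLp (rnd π (μ.bind (fun x => Pe x))) = Te (hm.toLp (rnd π μ)) := by
    intro μ h1 h2 hm
    have hae := hTe μ h1 h2 hm
    have hm' := MemLp.ae_eq hae (Lp.memLp (Te (hm.toLp (rnd π μ))))
    exact ⟨hm', Lp.ext (hm'.coeFn_toLp.trans hae.symm)⟩
  have hrate0 : (0 : ℝ) ≤ 1 - (α - ε) := by linarith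
  have master : ∀ (μ : Measure X), IsProbabilityMeasure μ → μ ≪ π →
      ∀ hm : MemLp (rnd π μ) 2 π, ∀ n : ℕ,
      ∃ (_ : IsProbabilityMeasure (mIter Pe n μ)) (_ : mIter Pe n μ ≪ π)
        (hmn : MemLp (rnd π (mIter Pe n μ)) 2 π),
        ‖hmn.toLp (rnd π (mIter Pe n μ)) - G‖
          ≤ (1 - (α - ε)) ^ n * ‖hm.toLp (rnd π μ) - G‖ := by
    intro μ h1 h2 hm n
    induction n with
    | zero => exact ⟨h1, h2, hm, by rw [pow_zero, one_mul]; exact le_rfl⟩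
    | succ n ih =>
      obtain ⟨p1, p2, p3, p4⟩ := ih
      have hiter : mIter Pe (n + 1) μ = (mIter Pe n μ).bind (fun x => Pe x) := by
        simp [mIter, Function.iterate_succ_apply']
      rw [hiter]
      have q1 : IsProbabilityMeasure ((mIter Pe n μ).bind fun x => Pe x) :=
        isProbabilityMeasure_bind' p1 Pe
      have q2 : (mIter Pe n μ).bind (fun x => Pe x) ≪ π := by
        have ha : mIter Pe n μ ≪ πe := p2.trans hac2
        have hb := bind_absCont (P := Pe) ha
        rw [hstate] at hb
        exact hb.trans hac1
      obtain ⟨q3, hq3⟩ := step (mIter Pe n μ) p1 p2 p3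
      refine ⟨q1, q2, q3, ?_⟩
      have hmean : ∫ x, (p3.toLp (rnd π (mIter Pe n μ)) - G) x ∂π = 0 :=
        hmz _ _ (hint _ p1 p2 p3) hGint
      calc ‖q3.toLp (rnd π ((mIter Pe n μ).bind fun x => Pe x)) - G‖
          = ‖Te (p3.toLp (rnd π (mIter Pe n μ)) - G)‖ := by rw [hq3, map_sub, hTeG]
        _ ≤ (1 - (α - ε)) * ‖p3.toLp (rnd π (mIter Pe n μ)) - G‖ := hcontr _ hmean
        _ ≤ (1 - (α - ε)) * ((1 - (α - ε)) ^ n * ‖hm.toLp (rnd π μ) - G‖) :=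
            mul_le_mul_of_nonneg_left p4 hrate0
        _ = (1 - (α - ε)) ^ (n + 1) * ‖hm.toLp (rnd π μ) - G‖ := by ring
  have hd2 : ∀ (μ ν : Measure X) (hμ : MemLp (rnd π μ) 2 π) (hν : MemLp (rnd π ν) 2 π),
      d2 π μ ν = ‖hμ.toLp (rnd π μ) - hν.toLp (rnd π ν)‖ := by
    intro μ ν hμ hν
    have he : (fun x => rnd π μ x - rnd π ν x)
        =ᵐ[π] ⇑(hμ.toLp (rnd π μ) - hν.toLp (rnd π ν)) := by
      filter_upwards [Lp.coeFn_sub (hμ.toLp (rnd π μ)) (hν.toLp (rnd π ν)),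
        hμ.coeFn_toLp, hν.coeFn_toLp] with x e1 e2 e3
      rw [e1, Pi.sub_apply, e2, e3]
    rw [d2, eLpNorm_congr_ae he, Lp.norm_def]
  have part1 : ∀ μ : Measure X, IsProbabilityMeasure μ → μ ≪ π → MemLp (rnd π μ) 2 π →
      ∀ n : ℕ, d2 π (mIter Pe n μ) π
        ≤ (1 - (α - ε)) ^ n * d2 π μ πe + ε / s := by
    intro μ h1 h2 hm n
    obtain ⟨q1, q2, q3, q4⟩ := master μ h1 h2 hm n
    rw [hd2 _ _ q3 hI, hd2 _ _ hm hπe]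
    calc ‖q3.toLp (rnd π (mIter Pe n μ)) - I‖
        ≤ ‖q3.toLp (rnd π (mIter Pe n μ)) - G‖ + ‖G - I‖ := by
          have h := norm_add_le (q3.toLp (rnd π (mIter Pe n μ)) - G) (G - I)
          rw [sub_add_sub_cancel] at h
          exact h
      _ ≤ (1 - (α - ε)) ^ n * ‖hm.toLp (rnd π μ) - G‖ + ε / s := add_le_add q4 hGI
  refine ⟨part1, ?_⟩
  intro ν h1 h2 M hM
  have h2' : ν ≪ π := h2.trans hac1
  have hM' : ∀ᵐ x ∂π, rnd πe ν x ≤ M := hac2.ae_le hM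
  have hmul : ν.rnDeriv πe * πe.rnDeriv π =ᵐ[π] ν.rnDeriv π :=
    Measure.rnDeriv_mul_rnDeriv h2
  have hmem : MemLp (rnd π ν) 2 π := by
    refine MemLp.of_le (hπe.const_mul M)
      ((Measure.measurable_rnDeriv ν π).ennreal_toReal.aestronglyMeasurable) ?_
    filter_upwards [hmul, hM'] with x e1 e2
    have hx : rnd π ν x = rnd πe ν x * rnd π πe x := by
      rw [rnd, ← e1, Pi.mul_apply, ENNReal.toReal_mul]; rfl
    rw [Real.norm_eq_abs, abs_of_nonneg (by rw [rnd]; exact ENNReal.toReal_nonneg)]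
    calc rnd π ν x = rnd πe ν x * rnd π πe x := hx
      _ ≤ M * rnd π πe x :=
          mul_le_mul_of_nonneg_right e2 ENNReal.toReal_nonneg
      _ ≤ ‖M * rnd π πe x‖ := le_abs_self _
  refine ⟨d2 π ν πe, fun n => ?_⟩
  obtain ⟨q1, q2, q3, q4⟩ := master ν h1 h2' hmem n
  have hd1 : d1 π (mIter Pe n ν) π ≤ d2 π (mIter Pe n ν) π := by
    have hsub : MemLp (fun x => rnd π (mIter Pe n ν) x - rnd π π x) 2 π := q3.sub hI
    rw [d1, d2]
    have e1 : ∫ x, |rnd π (mIter Pe n ν) x - rnd π π x| ∂π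
        = (eLpNorm (fun x => rnd π (mIter Pe n ν) x - rnd π π x) 1 π).toReal := by
      rw [eLpNorm_one_eq_lintegral_enorm]
      simp_rw [← Real.norm_eq_abs]
      exact integral_norm_eq_lintegral_enorm hsub.aestronglyMeasurable
    rw [e1]
    exact ENNReal.toReal_mono hsub.eLpNorm_ne_top
      (eLpNorm_le_eLpNorm_of_exponent_le one_le_two hsub.aestronglyMeasurable)
  have hp := part1 ν h1 h2' hmem n
  rw [mul_comm (d2 π ν πe)]
  linarith
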